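/- Let p_1,…,p_{N_s} > 0. Suppose for each i = 1,…,N_s the pair (x_i^{SL}, t_i) is an optimal solution of the SB-SLP problem in slot i (maximize t over (x, t) with CI_i(x, t) and ‖x‖² ≤ p_i) with t_i > 0. Set c := √( (∑_{j=1}^{N_s} p_j) / (∑_{j=1}^{N_s} p_j/t_j²) ). Then the tuple ((c/t_1)·x_1^{SL}, …, (c/t_{N_s})·x_{N_s}^{SL}, c) is an optimal solution of the block-level SB slot-variant problem with power budget P = ∑_{j=1}^{N_s} p_j: it is feasible (CI_i((c/t_i)·x_i^{SL}, c) for all i and ∑_i ‖(c/t_i)·x_i^{SL}‖² ≤ P) and every feasible (x_1,…,x_{N_s}, t) satisfies t ≤ c. -/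
import Mathlib


open scoped BigOperators

/-- The constructive-interference (CI) constraint in a given symbol slot:
`CI Nt Nr M h s γ σ x t` holds iff for every user `k`,
`Re((h_kᵀ x)/s_k) − |Im((h_kᵀ x)/s_k)| / tan(π/M) ≥ t·√(γ_k)·σ`. -/
noncomputable def CI (Nt Nr M : ℕ) (h : Fin Nr → Fin Nt → ℂ)
    (s : Fin Nr → ℂ) (γ : Fin Nr → ℝ) (σ : ℝ)
    (x : Fin Nt → ℂ) (t : ℝ) : Prop :=
  ∀ k : Fin Nr,
    ((∑ j, h k j * x j) / s k).re -
        |((∑ j, h k j * x j) / s k).im| / Real.tan (Real.pi / M) ≥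
      t * Real.sqrt (γ k) * σ

lemma CI_scale (Nt Nr M : ℕ) (h : Fin Nr → Fin Nt → ℂ)
    (s : Fin Nr → ℂ) (γ : Fin Nr → ℝ) (σ : ℝ)
    (x : Fin Nt → ℂ) (u r : ℝ) (hr : 0 ≤ r)
    (hCI : CI Nt Nr M h s γ σ x u) :
    CI Nt Nr M h s γ σ (r • x) (r * u) := by
  intro k
  have hk := hCI k
  have hsum : (∑ j, h k j * (r • x) j) = (r : ℂ) * ∑ j, h k j * x j := by
    rw [Finset.mul_sum]
    refine Finset.sum_congr rfl fun j _ => ?_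
    simp [Pi.smul_apply, Complex.real_smul]
    ring
  rw [hsum, mul_div_assoc, Complex.re_ofReal_mul, Complex.im_ofReal_mul,
    abs_mul, abs_of_nonneg hr]
  set z := (∑ j, h k j * x j) / s k
  have h2 := mul_le_mul_of_nonneg_left hk hr
  have e1 : r * z.re - r * |z.im| / Real.tan (Real.pi / M) =
      r * (z.re - |z.im| / Real.tan (Real.pi / M)) := by ring
  have e2 : r * u * Real.sqrt (γ k) * σ = r * (u * Real.sqrt (γ k) * σ) := by ring
  rw [ge_iff_le, e1, e2]
  exact h2

lemma sum_norm_smul_sq (Nt : ℕ) (r : ℝ) (x : Fin Nt → ℂ) :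
    ∑ j, ‖(r • x) j‖ ^ 2 = r ^ 2 * ∑ j, ‖x j‖ ^ 2 := by
  rw [Finset.mul_sum]
  refine Finset.sum_congr rfl fun j _ => ?_
  simp [Pi.smul_apply, norm_smul, Real.norm_eq_abs, mul_pow, sq_abs]

/-- From per-slot SB-SLP optima `(xᵢ^{SL}, tᵢ)` with budgets `pᵢ`, the rescaled tuple
`((c/t₁)·x₁^{SL}, …, (c/t_{N_s})·x_{N_s}^{SL}, c)` with
`c = √((∑pⱼ)/(∑pⱼ/tⱼ²))` is optimal for the block-level SB slot-variant problem
with budget `P = ∑pⱼ`. -/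
theorem stmt7 (Nt Nr Ns M : ℕ) (hNt : 0 < Nt) (hNr : 0 < Nr) (hNs : 0 < Ns)
    (hM : 3 ≤ M)
    (h : Fin Nr → Fin Nt → ℂ)
    (s : Fin Nr → Fin Ns → ℂ) (hs : ∀ k i, s k i ≠ 0)
    (γ : Fin Nr → Fin Ns → ℝ) (hγ : ∀ k i, 0 ≤ γ k i)
    (σ : ℝ) (hσ : 0 < σ)
    (p : Fin Ns → ℝ) (hp : ∀ i, 0 < p i)
    (xSL : Fin Ns → Fin Nt → ℂ) (t : Fin Ns → ℝ) (ht : ∀ i, 0 < t i)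
    (hfeas : ∀ i, CI Nt Nr M h (fun k => s k i) (fun k => γ k i) σ (xSL i) (t i))
    (hpow : ∀ i, ∑ j, ‖xSL i j‖ ^ 2 ≤ p i)
    (hopt : ∀ (i : Fin Ns) (x : Fin Nt → ℂ) (u : ℝ),
      CI Nt Nr M h (fun k => s k i) (fun k => γ k i) σ x u →
      (∑ j, ‖x j‖ ^ 2 ≤ p i) → u ≤ t i)
    (c : ℝ) (hc : c = Real.sqrt ((∑ j, p j) / (∑ j, p j / (t j) ^ 2))) :
    (∀ i, CI Nt Nr M h (fun k => s k i) (fun k => γ k i) σ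
        ((c / t i) • xSL i) c) ∧
    (∑ i, ∑ j, ‖((c / t i) • xSL i) j‖ ^ 2 ≤ ∑ j, p j) ∧
    (∀ (x : Fin Ns → Fin Nt → ℂ) (u : ℝ),
      (∀ i, CI Nt Nr M h (fun k => s k i) (fun k => γ k i) σ (x i) u) →
      (∑ i, ∑ j, ‖x i j‖ ^ 2 ≤ ∑ j, p j) → u ≤ c) := by
  have hne : Nonempty (Fin Ns) := ⟨⟨0, hNs⟩⟩
  have hS : 0 < ∑ j, p j := Finset.sum_pos (fun j _ => hp j) Finset.univ_nonempty
  have hT : 0 < ∑ j, p j / (t j) ^ 2 :=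
    Finset.sum_pos (fun j _ => div_pos (hp j) (pow_pos (ht j) 2)) Finset.univ_nonempty
  have hc2 : c ^ 2 = (∑ j, p j) / (∑ j, p j / (t j) ^ 2) := by
    rw [hc]; exact Real.sq_sqrt (div_pos hS hT).le
  have hcpos : 0 < c := by rw [hc]; exact Real.sqrt_pos.mpr (div_pos hS hT)
  refine ⟨?_, ?_, ?_⟩
  · intro i
    have hr : (0:ℝ) ≤ c / t i := (div_pos hcpos (ht i)).le
    have := CI_scale Nt Nr M h (fun k => s k i) (fun k => γ k i) σ
      (xSL i) (t i) (c / t i) hr (hfeas i)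
    rwa [div_mul_cancel₀ c (ne_of_gt (ht i))] at this
  · calc ∑ i, ∑ j, ‖((c / t i) • xSL i) j‖ ^ 2
        = ∑ i, (c / t i) ^ 2 * ∑ j, ‖xSL i j‖ ^ 2 := by
          exact Finset.sum_congr rfl fun i _ => sum_norm_smul_sq Nt _ _
      _ ≤ ∑ i, (c / t i) ^ 2 * p i := by
          refine Finset.sum_le_sum fun i _ => ?_
          exact mul_le_mul_of_nonneg_left (hpow i) (sq_nonneg _)
      _ = ∑ i, c ^ 2 * (p i / (t i) ^ 2) := by
          refine Finset.sum_congr rfl fun i _ => ?_; ring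
      _ = c ^ 2 * ∑ i, p i / (t i) ^ 2 := by rw [Finset.mul_sum]
      _ = ∑ j, p j := by rw [hc2, div_mul_cancel₀ _ (ne_of_gt hT)]
  · intro x u hCIx hpx
    rcases le_or_gt u 0 with h0 | hu
    · exact h0.trans hcpos.le
    have hq : ∀ i, u ^ 2 * (p i / (t i) ^ 2) ≤ ∑ j, ‖x i j‖ ^ 2 := by
      intro i
      set q := ∑ j, ‖x i j‖ ^ 2 with hqdef
      have hq0 : 0 ≤ q := Finset.sum_nonneg fun j _ => sq_nonneg _
      rcases eq_or_lt_of_le hq0 with hz | hqpos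
      · exfalso
        have hb : (0:ℝ) < 2 * t i / u := div_pos (by linarith [ht i]) hu
        have hCI2 := CI_scale Nt Nr M h (fun k => s k i) (fun k => γ k i) σ
          (x i) u (2 * t i / u) hb.le (hCIx i)
        have hple : ∑ j, ‖((2 * t i / u) • x i) j‖ ^ 2 ≤ p i := by
          rw [sum_norm_smul_sq, ← hqdef, ← hz, mul_zero]
          exact (hp i).le
        have hle := hopt i _ _ hCI2 hple
        rw [div_mul_cancel₀ _ (ne_of_gt hu)] at hle
        linarith [ht i]
      · have hb0 : (0:ℝ) ≤ Real.sqrt (p i / q) := Real.sqrt_nonneg _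
        have hCI2 := CI_scale Nt Nr M h (fun k => s k i) (fun k => γ k i) σ
          (x i) u (Real.sqrt (p i / q)) hb0 (hCIx i)
        have hple : ∑ j, ‖(Real.sqrt (p i / q) • x i) j‖ ^ 2 ≤ p i := by
          rw [sum_norm_smul_sq, ← hqdef, Real.sq_sqrt (div_pos (hp i) hqpos).le,
            div_mul_cancel₀ _ (ne_of_gt hqpos)]
        have hle := hopt i _ _ hCI2 hple
        have h1 : (Real.sqrt (p i / q) * u) ^ 2 ≤ (t i) ^ 2 := by
          have hbase : 0 ≤ Real.sqrt (p i / q) * u := mul_nonneg hb0 hu.le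
          exact pow_le_pow_left₀ hbase hle 2
        rw [mul_pow, Real.sq_sqrt (div_pos (hp i) hqpos).le] at h1
        rw [div_mul_eq_mul_div, div_le_iff₀ hqpos] at h1
        rw [← mul_div_assoc, div_le_iff₀ (pow_pos (ht i) 2)]
        nlinarith [h1]
    have hsum : u ^ 2 * ∑ i, p i / (t i) ^ 2 ≤ ∑ j, p j := by
      rw [Finset.mul_sum]
      exact le_trans (Finset.sum_le_sum fun i _ => hq i) hpx
    have hu2 : u ^ 2 ≤ c ^ 2 := by
      rw [hc2, le_div_iff₀ hT]; exact hsum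
    nlinarith [hu2, hcpos, hu]
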